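/- Let F be a field of characteristic different from 2 and N = a + b with a, b ≥ 0. Then H_{a,b} equals the centralizer in Sp_N(F) of the element ε = diag(I_a, −I_{2b}, I_a). -/

import Mathlib

open scoped MatrixGroups Matrix

namespace Stmt9

variable (F : Type*) [Field F]

/-- Extension of a tuple `n : Fin k → ℕ` by zero to all of `ℕ`. -/
def nExt {k : ℕ} (n : Fin k → ℕ) : ℕ → ℕ := fun i => if h : i < k then n ⟨i, h⟩ else 0

/-- Partial sums `ν_j = n 0 + ⋯ + n (j-1)`. -/
def psum {k : ℕ} (n : Fin k → ℕ) (j : ℕ) : ℕ := ∑ i ∈ Finset.range j, nExt n i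

/-- Block index of a position `x` with respect to the composition `c` with `K` parts. -/
def blkIdxF (c : ℕ → ℕ) (K : ℕ) (x : ℕ) : ℕ :=
  ((Finset.range K).filter (fun j => (∑ i ∈ Finset.range (j + 1), c i) ≤ x)).card

/-- The symplectic form `J_N = [[0, w_N], [-w_N, 0]]`, `w_N` the antidiagonal matrix. -/
def Jmat (N : ℕ) : Matrix (Fin (2 * N)) (Fin (2 * N)) F :=
  fun i j => if (i : ℕ) + (j : ℕ) = 2 * N - 1 then (if (i : ℕ) < N then 1 else -1) else 0

/-- The symplectic group `Sp_N(F) = { g ∈ GL_{2N}(F) : ᵗg J_N g = J_N }` (as a set). -/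
def SpSet (N : ℕ) : Set (GL (Fin (2 * N)) F) :=
  { g | (g.val)ᵀ * Jmat F N * g.val = Jmat F N }

/-- The composition `(n_1, …, n_k, 2r, n_k, …, n_1)` of `2N` underlying the standard
parabolic subgroup of `Sp_N` attached to `(n_1, …, n_k; r)`. -/
def cSp {k : ℕ} (n : Fin k → ℕ) (r : ℕ) : ℕ → ℕ :=
  fun i => if i < k then nExt n i else if i = k then 2 * r else nExt n (2 * k - i)

/-- The standard parabolic subgroup `P_{(n_1,…,n_k;r)}` of `Sp_N` (as a set): block upper
triangular symplectic matrices with diagonal blocks `n_1, …, n_k, 2r, n_k, …, n_1`. -/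
def PparSp (N : ℕ) {k : ℕ} (n : Fin k → ℕ) (r : ℕ) : Set (GL (Fin (2 * N)) F) :=
  { g | g ∈ SpSet F N ∧ ∀ i j : Fin (2 * N),
      blkIdxF (cSp n r) (2 * k + 1) (j : ℕ) < blkIdxF (cSp n r) (2 * k + 1) (i : ℕ) →
        g.val i j = 0 }

/-- The standard Levi subgroup `M_{(n_1,…,n_k;r)}` of `Sp_N` (as a set). -/
def MparSp (N : ℕ) {k : ℕ} (n : Fin k → ℕ) (r : ℕ) : Set (GL (Fin (2 * N)) F) :=
  { g | g ∈ SpSet F N ∧ ∀ i j : Fin (2 * N),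
      blkIdxF (cSp n r) (2 * k + 1) (j : ℕ) ≠ blkIdxF (cSp n r) (2 * k + 1) (i : ℕ) →
        g.val i j = 0 }

/-- The doubled permutation `σ̃` of `[0, 2N)` attached to `σ ∈ S_N`:
`i ↦ σ i` and `2N - 1 - i ↦ 2N - 1 - σ i` for `i < N`. -/
def dPerm (N : ℕ) (σ : Equiv.Perm (Fin N)) : Equiv.Perm (Fin (2 * N)) :=
  (Equiv.permCongr (finSumFinEquiv.trans (finCongr (two_mul N).symm)))
    (Equiv.sumCongr σ (Fin.revPerm.trans (σ.trans Fin.revPerm)))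

/-- The matrix `j(h₁, h₂)`: for `h₁ = [[A, B], [C, D]]` of size `2a × 2a` (blocks of size
`a × a`) and `h₂` of size `2b × 2b`, the `2(a+b) × 2(a+b)` matrix with `A, B, C, D` in the
four corner `a × a` blocks and `h₂` in the central `2b × 2b` block. -/
def jEmbed (a b : ℕ) (h1 : Matrix (Fin (2 * a)) (Fin (2 * a)) F)
    (h2 : Matrix (Fin (2 * b)) (Fin (2 * b)) F) :
    Matrix (Fin (2 * (a + b))) (Fin (2 * (a + b))) F := fun x y =>
  if hx : (x : ℕ) < a then
    if hy : (y : ℕ) < a then h1 ⟨(x : ℕ), by omega⟩ ⟨(y : ℕ), by omega⟩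
    else if hy2 : a + 2 * b ≤ (y : ℕ) then
      h1 ⟨(x : ℕ), by omega⟩ ⟨(y : ℕ) - 2 * b, by have := y.isLt; omega⟩
    else 0
  else if hx2 : a + 2 * b ≤ (x : ℕ) then
    if hy : (y : ℕ) < a then
      h1 ⟨(x : ℕ) - 2 * b, by have := x.isLt; omega⟩ ⟨(y : ℕ), by omega⟩
    else if hy2 : a + 2 * b ≤ (y : ℕ) then
      h1 ⟨(x : ℕ) - 2 * b, by have := x.isLt; omega⟩ ⟨(y : ℕ) - 2 * b, by have := y.isLt; omega⟩
    else 0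
  else
    if hy : a ≤ (y : ℕ) ∧ (y : ℕ) < a + 2 * b then
      h2 ⟨(x : ℕ) - a, by omega⟩ ⟨(y : ℕ) - a, by omega⟩
    else 0

/-- Upper triangular invertible matrices. -/
def UTSet (M : ℕ) : Set (GL (Fin M) F) :=
  { g | ∀ i j : Fin M, (j : ℕ) < (i : ℕ) → g.val i j = 0 }

/-- The subgroup `H_{a,b} = j(Sp_a × Sp_b)` of `Sp_{a+b}` (as a set). -/
def HSet (a b : ℕ) : Set (GL (Fin (2 * (a + b))) F) :=
  { g | ∃ h1 : GL (Fin (2 * a)) F, h1 ∈ SpSet F a ∧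
        ∃ h2 : GL (Fin (2 * b)) F, h2 ∈ SpSet F b ∧ g.val = jEmbed F a b h1.val h2.val }

/-- The subgroup `P₀^H = j(B_a × B_b)`, `B_c` the upper triangular subgroup of `Sp_c`. -/
def P0HSp (a b : ℕ) : Set (GL (Fin (2 * (a + b))) F) :=
  { g | ∃ h1 : GL (Fin (2 * a)) F, h1 ∈ SpSet F a ∩ UTSet F (2 * a) ∧
        ∃ h2 : GL (Fin (2 * b)) F, h2 ∈ SpSet F b ∩ UTSet F (2 * b) ∧
          g.val = jEmbed F a b h1.val h2.val }

/-- A monomial matrix: exactly one nonzero entry in each row and in each column. -/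
def IsMonomial {M : ℕ} (A : Matrix (Fin M) (Fin M) F) : Prop :=
  (∀ i, ∃! j, A i j ≠ 0) ∧ (∀ j, ∃! i, A i j ≠ 0)

/-- Conjugation `g S g⁻¹` of a set by a group element. -/
def conjSet {M : ℕ} (g : GL (Fin M) F) (S : Set (GL (Fin M) F)) : Set (GL (Fin M) F) :=
  (fun h => g * h * g⁻¹) '' S

/-- Conjugation `σ S σ⁻¹` by the permutation matrix of `σ`. -/
def conjPerm {M : ℕ} (σ : Equiv.Perm (Fin M)) (S : Set (GL (Fin M) F)) :
    Set (GL (Fin M) F) :=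
  { g | ∃ p ∈ S, g.val = (p.val).submatrix σ.symm σ.symm }

def blkPair {k : ℕ} (aT bT : Fin k → ℕ) (x : ℕ) : ℕ :=
  ((Finset.range k).filter (fun j => psum aT (j + 1) + psum bT (j + 1) ≤ x)).card

def isBTab {k : ℕ} (aT bT : Fin k → ℕ) (x : ℕ) : Bool :=
  decide (psum aT (blkPair aT bT x + 1) + psum bT (blkPair aT bT x) ≤ x)

/-- The permutation `σ_T` attached to a table `T = (aT, bT)` (GL recipe). -/
noncomputable def sigmaTab (N : ℕ) {k : ℕ} (aT bT : Fin k → ℕ) : Equiv.Perm (Fin N) :=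
  (Tuple.sort (fun x : Fin N => isBTab aT bT (x : ℕ)))⁻¹



section Helpers

variable {a b : ℕ}

/-- reversal `x ↦ 2N-1-x` on `Fin (2*N)`. -/
def rev (N : ℕ) (x : Fin (2 * N)) : Fin (2 * N) :=
  ⟨2 * N - 1 - (x : ℕ), by have := x.isLt; omega⟩

def embl (a b : ℕ) (u : Fin (2 * a)) : Fin (2 * (a + b)) :=
  ⟨if (u : ℕ) < a then (u : ℕ) else (u : ℕ) + 2 * b, by have := u.isLt; split <;> omega⟩

def embr (a b : ℕ) (u : Fin (2 * b)) : Fin (2 * (a + b)) :=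
  ⟨(u : ℕ) + a, by have := u.isLt; omega⟩

lemma emb_bij : Function.Bijective (Sum.elim (embl a b) (embr a b)) := by
  constructor
  · rintro (u | u) (v | v) h <;>
      simp only [Sum.elim_inl, Sum.elim_inr, embl, embr, Fin.mk.injEq] at h <;>
      [skip; skip; skip; exact congrArg _ (Fin.ext (by omega))] <;>
      (have := u.isLt; have := v.isLt) <;>
      [(apply congrArg; apply Fin.ext; split_ifs at h <;> omega);
       (exfalso; split_ifs at h <;> omega);
       (exfalso; split_ifs at h <;> omega)]
  · intro x
    have hx := x.isLt
    by_cases h1 : (x : ℕ) < a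
    · exact ⟨.inl ⟨(x : ℕ), by omega⟩, by simp [embl, h1]⟩
    by_cases h2 : a + 2 * b ≤ (x : ℕ)
    · refine ⟨.inl ⟨(x : ℕ) - 2 * b, by omega⟩, ?_⟩
      simp only [Sum.elim_inl, embl]
      apply Fin.ext; simp only [Fin.val_mk]; split <;> omega
    · refine ⟨.inr ⟨(x : ℕ) - a, by omega⟩, ?_⟩
      simp only [Sum.elim_inr, embr]
      apply Fin.ext; simp only [Fin.val_mk]; omega

lemma sum_emb {M : Type*} [AddCommMonoid M] (f : Fin (2 * (a + b)) → M) :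
    ∑ x, f x = (∑ u : Fin (2 * a), f (embl a b u)) + ∑ u : Fin (2 * b), f (embr a b u) := by
  rw [← Fintype.sum_bijective _ (emb_bij (a := a) (b := b))
    (fun s => f (Sum.elim (embl a b) (embr a b) s)) f (fun _ => rfl)]
  rw [Fintype.sum_sum_type]
  rfl

variable (F : Type*) [Field F]

lemma J_mul (N : ℕ) (g : Matrix (Fin (2 * N)) (Fin (2 * N)) F) (x j : Fin (2 * N)) :
    (Jmat F N * g) x j = (if (x : ℕ) < N then (1 : F) else -1) * g (rev N x) j := by
  rw [Matrix.mul_apply]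
  rw [Finset.sum_eq_single (rev N x)]
  · have hx := x.isLt
    simp only [Jmat, rev, Fin.val_mk]
    simp only [show (x:ℕ) + (2*N-1-(x:ℕ)) = 2*N-1 by omega, if_true]
  · intro y _ hy
    have hx := x.isLt
    have hy' : (x : ℕ) + (y : ℕ) ≠ 2 * N - 1 := by
      intro h
      apply hy; apply Fin.ext; simp only [rev, Fin.val_mk]; omega
    simp [Jmat, hy']
  · simp

lemma triple (N : ℕ) (g : Matrix (Fin (2 * N)) (Fin (2 * N)) F) (i j : Fin (2 * N)) :
    (gᵀ * Jmat F N * g) i j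
      = ∑ x, g x i * ((if (x : ℕ) < N then (1 : F) else -1) * g (rev N x) j) := by
  rw [Matrix.mul_assoc, Matrix.mul_apply]
  simp only [Matrix.transpose_apply, J_mul]

lemma rev_embl (u : Fin (2 * a)) : rev (a + b) (embl a b u) = embl a b (rev a u) := by
  have := u.isLt
  apply Fin.ext
  delta rev embl
  simp only [Fin.val_mk]
  split_ifs <;> omega

lemma rev_embr (u : Fin (2 * b)) : rev (a + b) (embr a b u) = embr a b (rev b u) := by
  have := u.isLt
  apply Fin.ext
  simp only [rev, embr, Fin.val_mk]
  omega

lemma embl_lt (u : Fin (2 * a)) : ((embl a b u : Fin (2 * (a + b))) : ℕ) < a + b ↔ (u : ℕ) < a := by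
  have := u.isLt
  simp only [embl, Fin.val_mk]
  split_ifs <;> omega

lemma embr_lt (u : Fin (2 * b)) : ((embr a b u : Fin (2 * (a + b))) : ℕ) < a + b ↔ (u : ℕ) < b := by
  have := u.isLt
  simp only [embr, Fin.val_mk]
  omega

variable (h1 : Matrix (Fin (2 * a)) (Fin (2 * a)) F) (h2 : Matrix (Fin (2 * b)) (Fin (2 * b)) F)

lemma jEmbed_ll (u v : Fin (2 * a)) :
    jEmbed F a b h1 h2 (embl a b u) (embl a b v) = h1 u v := by
  have hu := u.isLt; have hv := v.isLt
  simp only [jEmbed, embl, Fin.val_mk]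
  split_ifs <;> first
    | (congr 1 <;> (apply Fin.ext; simp only [Fin.val_mk]; omega))
    | omega

lemma jEmbed_rr (u v : Fin (2 * b)) :
    jEmbed F a b h1 h2 (embr a b u) (embr a b v) = h2 u v := by
  have hu := u.isLt; have hv := v.isLt
  delta jEmbed embr
  simp only [Fin.val_mk]
  split_ifs <;> first
    | (congr 1 <;> (apply Fin.ext; simp only [Fin.val_mk]; omega))
    | omega

lemma jEmbed_lr (u : Fin (2 * a)) (v : Fin (2 * b)) :
    jEmbed F a b h1 h2 (embl a b u) (embr a b v) = 0 := by
  have hu := u.isLt; have hv := v.isLt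
  simp only [jEmbed, embl, embr, Fin.val_mk]
  split_ifs <;> first | rfl | omega

lemma jEmbed_rl (u : Fin (2 * b)) (v : Fin (2 * a)) :
    jEmbed F a b h1 h2 (embr a b u) (embl a b v) = 0 := by
  have hu := u.isLt; have hv := v.isLt
  delta jEmbed embl embr
  simp only [Fin.val_mk]
  split_ifs <;> first | rfl | omega

lemma Jmat_ll (u v : Fin (2 * a)) :
    Jmat F (a + b) (embl a b u) (embl a b v) = Jmat F a u v := by
  have hu := u.isLt; have hv := v.isLt
  simp only [Jmat, embl, Fin.val_mk]
  split_ifs <;> first | rfl | omega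

lemma Jmat_rr (u v : Fin (2 * b)) :
    Jmat F (a + b) (embr a b u) (embr a b v) = Jmat F b u v := by
  have hu := u.isLt; have hv := v.isLt
  delta Jmat embr
  simp only [Fin.val_mk]
  split_ifs <;> first | rfl | omega

lemma Jmat_lr (u : Fin (2 * a)) (v : Fin (2 * b)) :
    Jmat F (a + b) (embl a b u) (embr a b v) = 0 := by
  have hu := u.isLt; have hv := v.isLt
  simp only [Jmat, embl, embr, Fin.val_mk]
  split_ifs <;> first | rfl | omega

lemma Jmat_rl (u : Fin (2 * b)) (v : Fin (2 * a)) :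
    Jmat F (a + b) (embr a b u) (embl a b v) = 0 := by
  have hu := u.isLt; have hv := v.isLt
  simp only [Jmat, embl, embr, Fin.val_mk]
  split_ifs <;> first | rfl | omega

end Helpers

section Key

variable {a b : ℕ} (F : Type*) [Field F]

lemma embl_not_mid (u : Fin (2 * a)) :
    ¬(a ≤ ((embl a b u : Fin (2 * (a + b))) : ℕ) ∧ ((embl a b u : Fin (2 * (a + b))) : ℕ) < a + 2 * b) := by
  have := u.isLt; simp only [embl, Fin.val_mk]; split_ifs <;> omega

lemma embr_mid (u : Fin (2 * b)) :
    a ≤ ((embr a b u : Fin (2 * (a + b))) : ℕ) ∧ ((embr a b u : Fin (2 * (a + b))) : ℕ) < a + 2 * b := by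
  have := u.isLt; simp only [embr, Fin.val_mk]; omega

variable (h1 : Matrix (Fin (2 * a)) (Fin (2 * a)) F) (h2 : Matrix (Fin (2 * b)) (Fin (2 * b)) F)

lemma jEmbed_zero (x y : Fin (2 * (a + b)))
    (hxy : ¬((a ≤ (x : ℕ) ∧ (x : ℕ) < a + 2 * b) ↔ (a ≤ (y : ℕ) ∧ (y : ℕ) < a + 2 * b))) :
    jEmbed F a b h1 h2 x y = 0 := by
  have hx := x.isLt; have hy := y.isLt
  simp only [jEmbed]; split_ifs <;> first | rfl | omega

lemma key :
    (jEmbed F a b h1 h2)ᵀ * Jmat F (a + b) * (jEmbed F a b h1 h2) = Jmat F (a + b) ↔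
      (h1ᵀ * Jmat F a * h1 = Jmat F a ∧ h2ᵀ * Jmat F b * h2 = Jmat F b) := by
  have Sll : ∀ u v, ((jEmbed F a b h1 h2)ᵀ * Jmat F (a + b) * (jEmbed F a b h1 h2))
      (embl a b u) (embl a b v) = (h1ᵀ * Jmat F a * h1) u v := by
    intro u v
    rw [triple, triple, sum_emb (fun x => jEmbed F a b h1 h2 x (embl a b u) *
      ((if (x : ℕ) < a + b then (1 : F) else -1) *
        jEmbed F a b h1 h2 (rev (a + b) x) (embl a b v)))]
    simp only [jEmbed_rl, zero_mul, Finset.sum_const_zero, add_zero]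
    apply Finset.sum_congr rfl
    intro w _
    have hc : (((embl a b w : Fin (2 * (a + b))) : ℕ) < a + b) = ((w : ℕ) < a) := by
      rw [eq_iff_iff]; exact embl_lt w
    rw [jEmbed_ll, rev_embl, jEmbed_ll]; simp only [hc]
  have Srr : ∀ u v, ((jEmbed F a b h1 h2)ᵀ * Jmat F (a + b) * (jEmbed F a b h1 h2))
      (embr a b u) (embr a b v) = (h2ᵀ * Jmat F b * h2) u v := by
    intro u v
    rw [triple, triple, sum_emb (fun x => jEmbed F a b h1 h2 x (embr a b u) *
      ((if (x : ℕ) < a + b then (1 : F) else -1) *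
        jEmbed F a b h1 h2 (rev (a + b) x) (embr a b v)))]
    simp only [jEmbed_lr, zero_mul, Finset.sum_const_zero, zero_add]
    apply Finset.sum_congr rfl
    intro w _
    have hc : (((embr a b w : Fin (2 * (a + b))) : ℕ) < a + b) = ((w : ℕ) < b) := by
      rw [eq_iff_iff]; exact embr_lt w
    rw [jEmbed_rr, rev_embr, jEmbed_rr]; simp only [hc]
  have Slr : ∀ u v, ((jEmbed F a b h1 h2)ᵀ * Jmat F (a + b) * (jEmbed F a b h1 h2))
      (embl a b u) (embr a b v) = 0 := by
    intro u v
    rw [triple, sum_emb (fun x => jEmbed F a b h1 h2 x (embl a b u) *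
      ((if (x : ℕ) < a + b then (1 : F) else -1) *
        jEmbed F a b h1 h2 (rev (a + b) x) (embr a b v)))]
    simp only [jEmbed_rl, rev_embl, jEmbed_lr, mul_zero, zero_mul,
      Finset.sum_const_zero, add_zero]
  have Srl : ∀ u v, ((jEmbed F a b h1 h2)ᵀ * Jmat F (a + b) * (jEmbed F a b h1 h2))
      (embr a b u) (embl a b v) = 0 := by
    intro u v
    rw [triple, sum_emb (fun x => jEmbed F a b h1 h2 x (embr a b u) *
      ((if (x : ℕ) < a + b then (1 : F) else -1) *
        jEmbed F a b h1 h2 (rev (a + b) x) (embl a b v)))]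
    simp only [jEmbed_lr, rev_embr, jEmbed_rl, mul_zero, zero_mul,
      Finset.sum_const_zero, add_zero]
  constructor
  · intro H
    constructor <;> ext u v
    · rw [← Sll u v, H, Jmat_ll]
    · rw [← Srr u v, H, Jmat_rr]
  · rintro ⟨H1, H2⟩
    ext x y
    obtain ⟨sx, hx⟩ := (emb_bij (a := a) (b := b)).surjective x
    obtain ⟨sy, hy⟩ := (emb_bij (a := a) (b := b)).surjective y
    subst hx; subst hy
    rcases sx with u | u <;> rcases sy with v | v <;>
      simp only [Sum.elim_inl, Sum.elim_inr]
    · rw [Sll, Jmat_ll, H1]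
    · rw [Slr, Jmat_lr]
    · rw [Srl, Jmat_rl]
    · rw [Srr, Jmat_rr, H2]

lemma JJ (N : ℕ) : Jmat F N * Jmat F N = (-1 : Matrix (Fin (2 * N)) (Fin (2 * N)) F) := by
  ext i k
  have hi := i.isLt; have hk := k.isLt
  rw [J_mul]
  delta Jmat rev
  simp only [Fin.val_mk, Matrix.neg_apply, Matrix.one_apply, Fin.ext_iff]
  split_ifs <;> first | omega | ring

lemma isUnit_of_sp {M : ℕ} (g : Matrix (Fin (2 * M)) (Fin (2 * M)) F)
    (hg : gᵀ * Jmat F M * g = Jmat F M) : IsUnit g := by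
  have hJ : IsUnit (Jmat F M) := ⟨⟨Jmat F M, -(Jmat F M),
    by rw [mul_neg, JJ, neg_neg], by rw [neg_mul, JJ, neg_neg]⟩, rfl⟩
  have hJd : (Jmat F M).det ≠ 0 :=
    ((Matrix.isUnit_iff_isUnit_det _).mp hJ).ne_zero
  rw [Matrix.isUnit_iff_isUnit_det]
  have hdet := congrArg Matrix.det hg
  rw [Matrix.det_mul, Matrix.det_mul, Matrix.det_transpose] at hdet
  have hd : g.det * g.det = 1 :=
    mul_right_cancel₀ hJd (by linear_combination hdet)
  exact IsUnit.of_mul_eq_one _ hd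

end Key

/-- If `char F ≠ 2`, then `H_{a,b} = j(Sp_a × Sp_b)` equals the centralizer
in `Sp_{a+b}(F)` of `ε = diag(I_a, -I_{2b}, I_a)`. -/
theorem stmt9 (h2 : (2 : F) ≠ 0) (a b : ℕ) :
    HSet F a b =
      { g | g ∈ SpSet F (a + b) ∧
        g.val * Matrix.diagonal
            (fun i : Fin (2 * (a + b)) =>
              if a ≤ (i : ℕ) ∧ (i : ℕ) < a + 2 * b then (-1 : F) else 1) =
          Matrix.diagonal
            (fun i : Fin (2 * (a + b)) =>
              if a ≤ (i : ℕ) ∧ (i : ℕ) < a + 2 * b then (-1 : F) else 1) * g.val } := by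
  ext g
  simp only [Set.mem_setOf_eq, HSet, SpSet]
  constructor
  · rintro ⟨u1, hs1, u2, hs2, hg⟩
    refine ⟨by rw [hg]; exact (key F u1.val u2.val).mpr ⟨hs1, hs2⟩, ?_⟩
    ext i j
    rw [Matrix.mul_diagonal, Matrix.diagonal_mul, hg]
    by_cases hi : a ≤ (i : ℕ) ∧ (i : ℕ) < a + 2 * b <;>
      by_cases hj : a ≤ (j : ℕ) ∧ (j : ℕ) < a + 2 * b
    · rw [if_pos hi, if_pos hj]; ring
    · rw [jEmbed_zero F u1.val u2.val i j (by tauto)]; ring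
    · rw [jEmbed_zero F u1.val u2.val i j (by tauto)]; ring
    · rw [if_neg hi, if_neg hj]; ring
  · rintro ⟨hsp, hcomm⟩
    have hblk : ∀ i j : Fin (2 * (a + b)),
        ¬((a ≤ (i : ℕ) ∧ (i : ℕ) < a + 2 * b) ↔ (a ≤ (j : ℕ) ∧ (j : ℕ) < a + 2 * b)) →
          g.val i j = 0 := by
      intro i j hij
      have hcij := congrFun (congrFun hcomm i) j
      rw [Matrix.mul_diagonal, Matrix.diagonal_mul] at hcij
      by_cases hi : a ≤ (i : ℕ) ∧ (i : ℕ) < a + 2 * b <;>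
        by_cases hj : a ≤ (j : ℕ) ∧ (j : ℕ) < a + 2 * b
      · exact absurd (iff_of_true hi hj) hij
      · rw [if_pos hi, if_neg hj] at hcij
        have h2g : (2 : F) * g.val i j = 0 := by linear_combination hcij
        exact (mul_eq_zero.mp h2g).resolve_left h2
      · rw [if_neg hi, if_pos hj] at hcij
        have h2g : (2 : F) * g.val i j = 0 := by linear_combination -hcij
        exact (mul_eq_zero.mp h2g).resolve_left h2
      · exact absurd (iff_of_false hi hj) hij
    obtain ⟨m1, hm1⟩ : ∃ m : Matrix (Fin (2 * a)) (Fin (2 * a)) F,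
        ∀ u v, m u v = g.val (embl a b u) (embl a b v) :=
      ⟨fun u v => g.val (embl a b u) (embl a b v), fun _ _ => rfl⟩
    obtain ⟨m2, hm2⟩ : ∃ m : Matrix (Fin (2 * b)) (Fin (2 * b)) F,
        ∀ u v, m u v = g.val (embr a b u) (embr a b v) :=
      ⟨fun u v => g.val (embr a b u) (embr a b v), fun _ _ => rfl⟩
    have geq : g.val = jEmbed F a b m1 m2 := by
      ext x y
      obtain ⟨sx, hx⟩ := (emb_bij (a := a) (b := b)).surjective x
      obtain ⟨sy, hy⟩ := (emb_bij (a := a) (b := b)).surjective y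
      subst hx; subst hy
      rcases sx with u | u <;> rcases sy with v | v <;>
        simp only [Sum.elim_inl, Sum.elim_inr]
      · rw [jEmbed_ll, hm1]
      · rw [jEmbed_lr]
        exact hblk _ _ (fun h => embl_not_mid u (h.mpr (embr_mid v)))
      · rw [jEmbed_rl]
        exact hblk _ _ (fun h => embl_not_mid v (h.mp (embr_mid u)))
      · rw [jEmbed_rr, hm2]
    have hKey := (key F m1 m2).mp (by rw [← geq]; exact hsp)
    have hu1 : IsUnit m1 := isUnit_of_sp F m1 hKey.1
    have hu2 : IsUnit m2 := isUnit_of_sp F m2 hKey.2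
    refine ⟨hu1.unit, ?_, hu2.unit, ?_, ?_⟩
    · show (hu1.unit.val)ᵀ * Jmat F a * hu1.unit.val = Jmat F a
      rw [hu1.unit_spec]; exact hKey.1
    · show (hu2.unit.val)ᵀ * Jmat F b * hu2.unit.val = Jmat F b
      rw [hu2.unit_spec]; exact hKey.2
    · rw [geq, hu1.unit_spec, hu2.unit_spec]

end Stmt9
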